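/- Let x, y ∈ ℝ^n, and suppose iso(y)_i < iso(x)_1 is possible; then in all cases, for every i ∈ {1,...,n}, the positive part satisfies (iso(x)_1 − iso(y)_i)_+ ≤ ‖x − y‖_SW / √i, where ‖·‖_SW is the sliding window norm with ψ(m) = √m. Consequently, Σ_{i=1}^n (iso(x)_1 − iso(y)_i)_+² ≤ 2 ‖x − y‖_SW² log(2n). -/

import Mathlib

open MeasureTheory Filter ProbabilityTheory

noncomputable section

/-- The isotonic (monotone nondecreasing) cone in `ℝ^n` with the Euclidean norm. -/
def monoCone (n : ℕ) : Set (EuclideanSpace ℝ (Fin n)) :=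
  {v | ∀ i j : Fin n, i ≤ j → v i ≤ v j}

open Classical in
/-- Euclidean projection onto the monotone cone (chosen minimizer of the distance). -/
def isoProj {n : ℕ} (x : EuclideanSpace ℝ (Fin n)) : EuclideanSpace ℝ (Fin n) :=
  if h : ∃ z ∈ monoCone n, ∀ w ∈ monoCone n, dist x z ≤ dist x w then h.choose else x

/-- The map `A_i` replacing entries `i` and `i+1` (0-based) by their common average. -/
def avgMap {n : ℕ} (i : ℕ) (x : EuclideanSpace ℝ (Fin n)) : EuclideanSpace ℝ (Fin n) :=
  WithLp.toLp 2 fun j => if h : i + 1 < n then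
      (if (j : ℕ) = i ∨ (j : ℕ) = i + 1
        then (x ⟨i, by omega⟩ + x ⟨i + 1, h⟩) / 2 else x j)
    else x j

/-- One step of neighbor pooling: average entries `i`, `i+1` if they violate monotonicity. -/
def isoStep {n : ℕ} (i : ℕ) (x : EuclideanSpace ℝ (Fin n)) : EuclideanSpace ℝ (Fin n) :=
  if h : i + 1 < n then
    (if x ⟨i, by omega⟩ ≤ x ⟨i + 1, h⟩ then x else avgMap i x)
  else x

/-- Nonincreasing under neighbor averaging. -/
def NUNA {n : ℕ} (N : Seminorm ℝ (EuclideanSpace ℝ (Fin n))) : Prop :=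
  ∀ x : EuclideanSpace ℝ (Fin n), ∀ i : ℕ, i + 1 < n → N (avgMap i x) ≤ N x

/-- Average of the `m` entries of `x` starting at (0-based) index `a`. -/
def wavg {n : ℕ} (x : EuclideanSpace ℝ (Fin n)) (a m : ℕ) : ℝ :=
  (∑ t ∈ Finset.range m, if h : a + t < n then x ⟨a + t, h⟩ else 0) / m

/-- The sliding window seminorm with weight function `ψ`. -/
def swNorm {n : ℕ} (ψ : ℕ → ℝ) (x : EuclideanSpace ℝ (Fin n)) : ℝ :=
  sSup {r | ∃ a m : ℕ, 1 ≤ m ∧ a + m ≤ n ∧ r = |wavg x a m| * ψ m}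


/-! ### Auxiliary lemmas -/

lemma monoCone_convex (n : ℕ) : Convex ℝ (monoCone n) := by
  intro u hu v hv a b ha hb hab i j hij
  simp only [PiLp.add_apply, PiLp.smul_apply, smul_eq_mul]
  have := hu i j hij
  have := hv i j hij
  nlinarith

lemma monoCone_isClosed (n : ℕ) : IsClosed (monoCone n) := by
  have : monoCone n = ⋂ (i : Fin n), ⋂ (j : Fin n), ⋂ (_ : i ≤ j),
      {v : EuclideanSpace ℝ (Fin n) | v i ≤ v j} := by
    ext v; simp [monoCone]
  rw [this]
  refine isClosed_iInter fun i => isClosed_iInter fun j => isClosed_iInter fun hij => ?_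
  exact isClosed_le (EuclideanSpace.proj i).continuous (EuclideanSpace.proj j).continuous

lemma isoProj_spec {n : ℕ} (x : EuclideanSpace ℝ (Fin n)) :
    isoProj x ∈ monoCone n ∧ ∀ w ∈ monoCone n, dist x (isoProj x) ≤ dist x w := by
  have hex : ∃ z ∈ monoCone n, ∀ w ∈ monoCone n, dist x z ≤ dist x w := by
    obtain ⟨v, hv, hmin⟩ := exists_norm_eq_iInf_of_complete_convex
      (K := monoCone n) ⟨0, fun i j _ => le_refl 0⟩
      ((monoCone_isClosed n).isComplete) (monoCone_convex n) x
    refine ⟨v, hv, fun w hw => ?_⟩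
    rw [dist_eq_norm, dist_eq_norm, hmin]
    have hbdd : BddBelow (Set.range fun w : monoCone n =>
        ‖x - (w : EuclideanSpace ℝ (Fin n))‖) := by
      refine ⟨0, ?_⟩
      rintro r ⟨w, rfl⟩
      exact norm_nonneg _
    exact ciInf_le hbdd (⟨w, hw⟩ : monoCone n)
  rw [isoProj, dif_pos hex]
  exact ⟨hex.choose_spec.1, hex.choose_spec.2⟩

lemma isoProj_mem {n : ℕ} (x : EuclideanSpace ℝ (Fin n)) : isoProj x ∈ monoCone n :=
  (isoProj_spec x).1

lemma isoProj_inner {n : ℕ} (x : EuclideanSpace ℝ (Fin n)) :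
    ∀ w ∈ monoCone n, @inner ℝ _ _ (x - isoProj x) (w - isoProj x) ≤ 0 := by
  obtain ⟨hmem, hmin⟩ := isoProj_spec x
  haveI : Nonempty (monoCone n) := ⟨⟨_, hmem⟩⟩
  have h_eq : ‖x - isoProj x‖ = ⨅ w : monoCone n, ‖x - (w : EuclideanSpace ℝ (Fin n))‖ := by
    have hbdd : BddBelow (Set.range fun w : monoCone n =>
        ‖x - (w : EuclideanSpace ℝ (Fin n))‖) := by
      refine ⟨0, ?_⟩
      rintro r ⟨w, rfl⟩
      exact norm_nonneg _
    refine le_antisymm (le_ciInf fun w => ?_) (ciInf_le hbdd ⟨_, hmem⟩)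
    have := hmin w w.2
    rwa [dist_eq_norm, dist_eq_norm] at this
  exact (norm_eq_iInf_iff_real_inner_le_zero (monoCone_convex n) hmem).mp h_eq

/-- prefix indicator vector -/
def preInd {n : ℕ} (k : ℕ) : EuclideanSpace ℝ (Fin n) :=
  WithLp.toLp 2 fun j => if (j : ℕ) ≤ k then 1 else 0

lemma inner_preInd {n : ℕ} (u : EuclideanSpace ℝ (Fin n)) (k : ℕ) :
    (inner ℝ u (preInd (n := n) k) : ℝ) = ∑ j : Fin n, if (j : ℕ) ≤ k then u j else 0 := by
  rw [PiLp.inner_apply]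
  refine Finset.sum_congr rfl fun j _ => ?_
  simp only [RCLike.inner_apply, conj_trivial, preInd, PiLp.toLp_apply]
  by_cases h : (j : ℕ) ≤ k <;> simp [h]

lemma sum_ite_eq_range {n : ℕ} (v : Fin n → ℝ) (k : ℕ) (hk : k < n) :
    ∑ j : Fin n, (if (j : ℕ) ≤ k then v j else 0)
      = ∑ t ∈ Finset.range (k + 1), (if h : t < n then v ⟨t, h⟩ else 0) := by
  have h1 : ∑ j : Fin n, (if (j : ℕ) ≤ k then v j else 0)
      = ∑ t ∈ Finset.range n, (if h : t < n then (if t ≤ k then v ⟨t, h⟩ else 0) else 0) := by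
    rw [← Fin.sum_univ_eq_sum_range]
    exact Finset.sum_congr rfl fun j _ => by simp [j.isLt]
  rw [h1, ← Finset.sum_subset (Finset.range_subset_range.mpr (by omega : k + 1 ≤ n))
    (fun t ht hnot => by
      simp only [Finset.mem_range, not_lt] at ht hnot
      rw [dif_pos ht, if_neg (by omega)])]
  refine Finset.sum_congr rfl fun t ht => ?_
  simp only [Finset.mem_range] at ht
  rw [dif_pos (by omega : t < n), if_pos (by omega : t ≤ k), dif_pos]

lemma prefixA {n : ℕ} (x : EuclideanSpace ℝ (Fin n)) (k : ℕ) :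
    (∑ j : Fin n, if (j : ℕ) ≤ k then isoProj x j else 0)
      ≤ ∑ j : Fin n, if (j : ℕ) ≤ k then x j else 0 := by
  set z := isoProj x with hz
  have hmem := isoProj_mem x
  have hcone : z - preInd k ∈ monoCone n := by
    intro p q hpq
    have hpq' : (p : ℕ) ≤ q := hpq
    have hzpq := hmem p q hpq
    simp only [PiLp.sub_apply, preInd, PiLp.toLp_apply]
    by_cases hq : (q : ℕ) ≤ k
    · rw [if_pos (le_trans hpq' hq), if_pos hq]; linarith
    · rw [if_neg hq]
      by_cases hp : (p : ℕ) ≤ k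
      · rw [if_pos hp]; linarith
      · rw [if_neg hp]; linarith
  have key := isoProj_inner x _ hcone
  have hsub : z - preInd (n := n) k - z = -preInd (n := n) k := by abel
  rw [hsub, inner_neg_right, inner_preInd] at key
  have : 0 ≤ ∑ j : Fin n, if (j : ℕ) ≤ k then (x - z) j else 0 := by linarith
  have hsplit : ∑ j : Fin n, (if (j : ℕ) ≤ k then (x - z) j else 0)
      = (∑ j : Fin n, if (j : ℕ) ≤ k then x j else 0)
        - ∑ j : Fin n, if (j : ℕ) ≤ k then z j else 0 := by
    rw [← Finset.sum_sub_distrib]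
    refine Finset.sum_congr rfl fun j _ => ?_
    by_cases h : (j : ℕ) ≤ k <;> simp [h, PiLp.sub_apply]
  rw [hsplit] at this
  linarith

lemma blockB {n : ℕ} (y : EuclideanSpace ℝ (Fin n)) (i : Fin n) :
    ∃ b : Fin n, i ≤ b ∧ isoProj y b = isoProj y i ∧
      (∑ j : Fin n, if (j : ℕ) ≤ (b : ℕ) then y j else 0)
        ≤ ∑ j : Fin n, if (j : ℕ) ≤ (b : ℕ) then isoProj y j else 0 := by
  set z := isoProj y with hz
  have hmem := isoProj_mem y
  set S : Finset (Fin n) := Finset.univ.filter (fun j => i ≤ j ∧ z j = z i) with hS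
  have hiS : i ∈ S := by simp [hS]
  set b := S.max' ⟨i, hiS⟩ with hb
  have hbS : b ∈ S := S.max'_mem _
  rw [hS, Finset.mem_filter] at hbS
  obtain ⟨-, hib, hzb⟩ := hbS
  refine ⟨b, hib, hzb, ?_⟩
  obtain ⟨t, htpos, hcone⟩ : ∃ t : ℝ, 0 < t ∧ z + t • preInd (b : ℕ) ∈ monoCone n := by
    by_cases hbn : (b : ℕ) + 1 < n
    · refine ⟨z ⟨(b : ℕ) + 1, hbn⟩ - z b, ?_, ?_⟩
      · rcases lt_or_eq_of_le (hmem b ⟨(b : ℕ) + 1, hbn⟩ (by simp [Fin.le_def])) with h | h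
        · linarith
        · exfalso
          have hmemS : (⟨(b : ℕ) + 1, hbn⟩ : Fin n) ∈ S := by
            rw [hS, Finset.mem_filter]
            exact ⟨Finset.mem_univ _, le_trans hib (by simp [Fin.le_def]),
              by rw [show z ⟨(b : ℕ) + 1, hbn⟩ = z b from h.symm, hzb]⟩
          have := S.le_max' _ hmemS
          rw [← hb] at this
          simp [Fin.le_def] at this
      · intro p q hpq
        have hpq' : (p : ℕ) ≤ q := hpq
        have hzpq := hmem p q hpq
        simp only [PiLp.add_apply, PiLp.smul_apply, smul_eq_mul, preInd, PiLp.toLp_apply]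
        by_cases hq : (q : ℕ) ≤ (b : ℕ)
        · rw [if_pos (le_trans hpq' hq), if_pos hq]; linarith
        · rw [if_neg hq]
          by_cases hp : (p : ℕ) ≤ (b : ℕ)
          · rw [if_pos hp]
            have h1 : z p ≤ z b := hmem p b hp
            have h2 : z ⟨(b : ℕ) + 1, hbn⟩ ≤ z q := hmem _ q (by simp [Fin.le_def]; omega)
            linarith
          · rw [if_neg hp]; linarith
    · refine ⟨1, one_pos, ?_⟩
      intro p q hpq
      have hzpq := hmem p q hpq
      have hq : (q : ℕ) ≤ (b : ℕ) := by have := q.isLt; omega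
      have hp : (p : ℕ) ≤ (b : ℕ) := by
        have := p.isLt; have hpq' : (p : ℕ) ≤ q := hpq; omega
      simp only [PiLp.add_apply, PiLp.smul_apply, smul_eq_mul, preInd, PiLp.toLp_apply, if_pos hp, if_pos hq]
      linarith
  have key := isoProj_inner y _ hcone
  have hsub : z + t • preInd (n := n) (b : ℕ) - z = t • preInd (n := n) (b : ℕ) := by abel
  rw [hsub, real_inner_smul_right, inner_preInd] at key
  have hle : (∑ j : Fin n, if (j : ℕ) ≤ (b : ℕ) then (y - z) j else 0) ≤ 0 := by
    by_contra hpos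
    push_neg at hpos
    nlinarith
  have hsplit : ∑ j : Fin n, (if (j : ℕ) ≤ (b : ℕ) then (y - z) j else 0)
      = (∑ j : Fin n, if (j : ℕ) ≤ (b : ℕ) then y j else 0)
        - ∑ j : Fin n, if (j : ℕ) ≤ (b : ℕ) then z j else 0 := by
    rw [← Finset.sum_sub_distrib]
    refine Finset.sum_congr rfl fun j _ => ?_
    by_cases h : (j : ℕ) ≤ (b : ℕ) <;> simp [h, PiLp.sub_apply]
  rw [hsplit] at hle
  linarith

lemma swNorm_bddAbove {n : ℕ} (ψ : ℕ → ℝ) (v : EuclideanSpace ℝ (Fin n)) :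
    BddAbove {r | ∃ a m : ℕ, 1 ≤ m ∧ a + m ≤ n ∧ r = |wavg v a m| * ψ m} := by
  refine Set.Finite.bddAbove (Set.Finite.subset
    (((Set.finite_Iic n).prod (Set.finite_Iic n)).image
      (fun p : ℕ × ℕ => |wavg v p.1 p.2| * ψ p.2)) ?_)
  rintro r ⟨a, m, hm, ham, rfl⟩
  exact ⟨(a, m), ⟨by simpa using by omega, by simpa using by omega⟩, rfl⟩

lemma le_swNorm {n : ℕ} (v : EuclideanSpace ℝ (Fin n)) (a m : ℕ) (hm : 1 ≤ m)
    (ham : a + m ≤ n) :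
    |wavg v a m| * Real.sqrt m ≤ swNorm (fun m => Real.sqrt m) v :=
  le_csSup (swNorm_bddAbove _ _) ⟨a, m, hm, ham, rfl⟩

lemma swNorm_nonneg {n : ℕ} (hn : 1 ≤ n) (v : EuclideanSpace ℝ (Fin n)) :
    0 ≤ swNorm (fun m => Real.sqrt m) v :=
  le_trans (by positivity) (le_swNorm v 0 1 le_rfl (by omega))

lemma key_bound {n : ℕ} (hn : 1 ≤ n) (x y : EuclideanSpace ℝ (Fin n)) (i : Fin n) :
    isoProj x ⟨0, hn⟩ - isoProj y i
      ≤ swNorm (fun m => Real.sqrt m) (x - y) / Real.sqrt ((i : ℕ) + 1) := by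
  obtain ⟨b, hib, hzb, hB⟩ := blockB y i
  set m := (b : ℕ) + 1 with hm
  have hbn : (b : ℕ) < n := b.isLt
  have hmn : m ≤ n := by omega
  have hconst : ∀ c : ℝ, ∑ j : Fin n, (if (j : ℕ) ≤ (b : ℕ) then c else 0) = m * c := by
    intro c
    rw [sum_ite_eq_range (fun _ => c) _ hbn]
    have h : ∀ t ∈ Finset.range m, (if _ : t < n then c else 0) = c := fun t ht =>
      dif_pos (by simp only [Finset.mem_range] at ht; omega)
    rw [Finset.sum_congr rfl h, Finset.sum_const, Finset.card_range, nsmul_eq_mul]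
  have hwavg : ∀ v : EuclideanSpace ℝ (Fin n),
      wavg v 0 m = (∑ j : Fin n, if (j : ℕ) ≤ (b : ℕ) then v j else 0) / m := by
    intro v
    rw [wavg, sum_ite_eq_range (fun j => v j) _ hbn]
    congr 1
    refine Finset.sum_congr rfl fun t ht => ?_
    simp only [Finset.mem_range] at ht
    rw [dif_pos (show 0 + t < n by omega), dif_pos (show t < n by omega)]
    exact congrArg v (Fin.ext (by simp))
  have hmpos : (0 : ℝ) < m := by positivity
  have h1 : isoProj x ⟨0, hn⟩ ≤ wavg x 0 m := by
    rw [hwavg, le_div_iff₀ hmpos]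
    calc isoProj x ⟨0, hn⟩ * m = m * isoProj x ⟨0, hn⟩ := mul_comm _ _
      _ = ∑ j : Fin n, (if (j : ℕ) ≤ (b : ℕ) then isoProj x ⟨0, hn⟩ else 0) := (hconst _).symm
      _ ≤ ∑ j : Fin n, (if (j : ℕ) ≤ (b : ℕ) then isoProj x j else 0) := by
          refine Finset.sum_le_sum fun j _ => ?_
          by_cases h : (j : ℕ) ≤ (b : ℕ)
          · simp only [if_pos h]
            exact isoProj_mem x ⟨0, hn⟩ j (by rw [Fin.le_def]; exact Nat.zero_le _)
          · simp [h]
      _ ≤ _ := prefixA x (b : ℕ)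
  have h2 : wavg y 0 m ≤ isoProj y i := by
    rw [hwavg, div_le_iff₀ hmpos]
    calc (∑ j : Fin n, if (j : ℕ) ≤ (b : ℕ) then y j else 0)
        ≤ ∑ j : Fin n, (if (j : ℕ) ≤ (b : ℕ) then isoProj y j else 0) := hB
      _ ≤ ∑ j : Fin n, (if (j : ℕ) ≤ (b : ℕ) then isoProj y b else 0) := by
          refine Finset.sum_le_sum fun j _ => ?_
          by_cases h : (j : ℕ) ≤ (b : ℕ)
          · simp only [if_pos h]
            exact isoProj_mem y j b (by rwa [Fin.le_def])
          · simp [h]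
      _ = m * isoProj y b := hconst _
      _ = isoProj y i * m := by rw [hzb]; ring
  have h3 : wavg x 0 m - wavg y 0 m = wavg (x - y) 0 m := by
    rw [hwavg, hwavg, hwavg, div_sub_div_same, ← Finset.sum_sub_distrib]
    congr 1
    refine Finset.sum_congr rfl fun j _ => ?_
    by_cases h : (j : ℕ) ≤ (b : ℕ) <;> simp [h, PiLp.sub_apply]
  have hsqm : (0 : ℝ) < Real.sqrt m := Real.sqrt_pos.mpr (by positivity)
  have h4 : wavg (x - y) 0 m ≤ swNorm (fun m => Real.sqrt m) (x - y) / Real.sqrt m := by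
    rw [le_div_iff₀ hsqm]
    exact le_trans (mul_le_mul_of_nonneg_right (le_abs_self _) (Real.sqrt_nonneg _))
      (le_swNorm (x - y) 0 m (by omega) (by omega))
  have h5 : swNorm (fun m => Real.sqrt m) (x - y) / Real.sqrt m
      ≤ swNorm (fun m => Real.sqrt m) (x - y) / Real.sqrt ((i : ℕ) + 1) := by
    have hia : ((i : ℕ) : ℝ) + 1 ≤ (m : ℝ) := by
      have : (i : ℕ) + 1 ≤ m := by
        have := hib
        rw [Fin.le_def] at this
        omega
      exact_mod_cast this
    gcongr <;>
      first
        | exact swNorm_nonneg hn (x - y)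
        | positivity
        | exact Real.sqrt_le_sqrt hia
  linarith

lemma harmonic_aux : ∀ n : ℕ, 1 ≤ n →
    ∑ i ∈ Finset.range n, (1 : ℝ) / (i + 1) ≤ 1 + Real.log n := by
  intro n hn
  induction n, hn using Nat.le_induction with
  | base => simp
  | succ n hn ih =>
    rw [Finset.sum_range_succ]
    have hn0 : (0 : ℝ) < (n : ℝ) := by exact_mod_cast hn
    have hlog : Real.log ((n : ℝ) / (n + 1)) ≤ (n : ℝ) / (n + 1) - 1 :=
      Real.log_le_sub_one_of_pos (by positivity)
    rw [Real.log_div (by positivity) (by positivity)] at hlog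
    have heq : (n : ℝ) / (n + 1) - 1 = -(1 / (n + 1)) := by field_simp; ring
    rw [heq] at hlog
    push_cast
    linarith

lemma harmonic_le (n : ℕ) (hn : 1 ≤ n) :
    ∑ i ∈ Finset.range n, (1 : ℝ) / (i + 1) ≤ 2 * Real.log (2 * n) := by
  have h1 := harmonic_aux n hn
  have hn0 : (0 : ℝ) < (n : ℝ) := by exact_mod_cast hn
  have h2 : Real.log (2 * (n : ℝ)) = Real.log 2 + Real.log n :=
    Real.log_mul two_ne_zero (by positivity)
  have h3 : 0 ≤ Real.log (n : ℝ) := Real.log_nonneg (by exact_mod_cast hn)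
  have h4 : (0.6931471803 : ℝ) < Real.log 2 := Real.log_two_gt_d9
  have : ∑ i ∈ Finset.range n, (1 : ℝ) / (i + 1) ≤ 2 * Real.log (2 * (n : ℝ)) := by
    nlinarith
  simpa using this

theorem stmt15 (n : ℕ) (hn : 1 ≤ n) (x y : EuclideanSpace ℝ (Fin n)) :
    (∀ i : Fin n,
      max (isoProj x ⟨0, hn⟩ - isoProj y i) 0
        ≤ swNorm (fun m => Real.sqrt m) (x - y) / Real.sqrt ((i : ℕ) + 1)) ∧
    ∑ i : Fin n, (max (isoProj x ⟨0, hn⟩ - isoProj y i) 0) ^ 2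
      ≤ 2 * (swNorm (fun m => Real.sqrt m) (x - y)) ^ 2 * Real.log (2 * n) := by
  set SW := swNorm (fun m => Real.sqrt m) (x - y) with hSW
  have hSWnn : 0 ≤ SW := swNorm_nonneg hn (x - y)
  have hpart1 : ∀ i : Fin n,
      max (isoProj x ⟨0, hn⟩ - isoProj y i) 0 ≤ SW / Real.sqrt ((i : ℕ) + 1) := by
    intro i
    refine max_le (key_bound hn x y i) ?_
    have : (0 : ℝ) < Real.sqrt ((i : ℕ) + 1) := Real.sqrt_pos.mpr (by positivity)
    exact div_nonneg hSWnn this.le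
  refine ⟨hpart1, ?_⟩
  calc ∑ i : Fin n, (max (isoProj x ⟨0, hn⟩ - isoProj y i) 0) ^ 2
      ≤ ∑ i : Fin n, (SW / Real.sqrt ((i : ℕ) + 1)) ^ 2 := by
        refine Finset.sum_le_sum fun i _ => ?_
        exact pow_le_pow_left₀ (le_max_right _ _) (hpart1 i) 2
    _ = ∑ i : Fin n, SW ^ 2 * (1 / ((i : ℕ) + 1)) := by
        refine Finset.sum_congr rfl fun i _ => ?_
        rw [div_pow, Real.sq_sqrt (by positivity)]
        ring
    _ = SW ^ 2 * ∑ i ∈ Finset.range n, (1 : ℝ) / (i + 1) := by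
        rw [← Finset.mul_sum]
        congr 1
        exact Fin.sum_univ_eq_sum_range (fun i => (1 : ℝ) / (i + 1)) n
    _ ≤ SW ^ 2 * (2 * Real.log (2 * n)) :=
        mul_le_mul_of_nonneg_left (harmonic_le n hn) (sq_nonneg _)
    _ = 2 * SW ^ 2 * Real.log (2 * n) := by ring
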